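/- Let Y be a continuum irreducible between two points p and q, and let A, B be proper subcontinua with Y = A ∪ B, p ∈ A, q ∈ B. If the closure of Y \ A is disconnected, then there is a proper subcontinuum of Y containing both p and q — a contradiction; hence the closure of Y \ A is connected. -/
import Mathlib

/-- If `A` is closed and preconnected, `u, v` are disjoint closed sets covering `Aᶜ`, and
`p ∈ A`, then `A ∪ u` is preconnected. -/
lemma stmt15_aux {Y : Type*} [TopologicalSpace Y] [PreconnectedSpace Y]
    {A u v : Set Y} (hAcl : IsClosed A) (hAconn : IsPreconnected A)
    (hu : IsClosed u) (hv : IsClosed v) (huv : u ∩ v = ∅) (hcov : Aᶜ ⊆ u ∪ v)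
    {p : Y} (hp : p ∈ A) : IsPreconnected (A ∪ u) := by
  rw [isPreconnected_iff_subset_of_fully_disjoint_closed (hAcl.union hu)]
  intro u' v' hu' hv' hC hdisj
  rw [Set.disjoint_iff_inter_eq_empty] at hdisj
  -- A is contained in one of u', v'
  have hAsub : A ⊆ u' ∨ A ⊆ v' := by
    rw [isPreconnected_iff_subset_of_fully_disjoint_closed hAcl] at hAconn
    exact hAconn u' v' hu' hv' (fun x hx => hC (Or.inl hx))
      (Set.disjoint_iff_inter_eq_empty.mpr hdisj)
  -- symmetric argument
  have key : ∀ w' z' : Set Y, IsClosed w' → IsClosed z' → (A ∪ u) ⊆ w' ∪ z' →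
      w' ∩ z' = ∅ → A ⊆ w' → (A ∪ u) ⊆ w' := by
    intro w' z' hw' hz' hCw hdw hAw
    -- D := (A ∪ u) ∩ z' is clopen
    set D : Set Y := (A ∪ u) ∩ z' with hD
    have hDeq : D = Aᶜ ∩ vᶜ ∩ w'ᶜ := by
      ext x
      constructor
      · rintro ⟨hx1, hx2⟩
        have hxw : x ∉ w' := fun hw => Set.eq_empty_iff_forall_notMem.mp hdw x ⟨hw, hx2⟩
        have hxA : x ∉ A := fun hA => hxw (hAw hA)
        have hxu : x ∈ u := hx1.resolve_left hxA
        have hxv : x ∉ v := fun hv => Set.eq_empty_iff_forall_notMem.mp huv x ⟨hxu, hv⟩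
        exact ⟨⟨hxA, hxv⟩, hxw⟩
      · rintro ⟨⟨hxA, hxv⟩, hxw⟩
        have hxu : x ∈ u := (hcov hxA).resolve_right hxv
        have hxz : x ∈ z' := (hCw (Or.inr hxu)).resolve_left hxw
        exact ⟨Or.inr hxu, hxz⟩
    have hDclopen : IsClopen D := by
      constructor
      · exact (hAcl.union hu).inter hz'
      · rw [hDeq]
        exact ((hAcl.isOpen_compl.inter hv.isOpen_compl).inter hw'.isOpen_compl)
    rcases isClopen_iff.mp hDclopen with h | h
    · -- D = ∅, so A ∪ u ⊆ w'
      intro x hx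
      rcases hCw hx with hw | hz
      · exact hw
      · exact absurd (Set.eq_empty_iff_forall_notMem.mp h x ⟨hx, hz⟩) (fun h => h)
    · -- D = univ is impossible since p ∈ A ⊆ w'
      exfalso
      have hpz : p ∈ z' := (h ▸ (Set.mem_univ p) : p ∈ D).2
      exact Set.eq_empty_iff_forall_notMem.mp hdw p ⟨hAw hp, hpz⟩
  rcases hAsub with hA | hA
  · exact Or.inl (key u' v' hu' hv' hC hdisj hA)
  · refine Or.inr (key v' u' hv' hu' ?_ ?_ hA)
    · rwa [Set.union_comm v' u']
    · rwa [Set.inter_comm]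

/-- One case of the main argument: a contradiction when `q ∈ u` and `Aᶜ ∩ v` is nonempty. -/
lemma stmt15_aux2 {Y : Type*} [TopologicalSpace Y] [PreconnectedSpace Y]
    {A u v : Set Y} (hAcl : IsClosed A) (hAconn : IsPreconnected A)
    (hu : IsClosed u) (hv : IsClosed v) (huv : u ∩ v = ∅) (hcov : Aᶜ ⊆ u ∪ v)
    {p q : Y} (hp : p ∈ A)
    (hirr : ∀ C : Set Y, IsClosed C → IsPreconnected C → p ∈ C → q ∈ C → C = Set.univ)
    (hqu : q ∈ u) (hV : (Aᶜ ∩ v).Nonempty) : False := by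
  have hconn := stmt15_aux hAcl hAconn hu hv huv hcov hp
  have huniv : A ∪ u = Set.univ :=
    hirr (A ∪ u) (hAcl.union hu) hconn (Or.inl hp) (Or.inr hqu)
  obtain ⟨x, hxA, hxv⟩ := hV
  have hx : x ∈ A ∪ u := huniv ▸ Set.mem_univ x
  rcases hx with h | h
  · exact hxA h
  · exact Set.eq_empty_iff_forall_notMem.mp huv x ⟨h, hxv⟩

/-- If a continuum Y is irreducible between p and q, and Y = A ∪ B with A, B
proper subcontinua, p ∈ A, q ∈ B, then the closure of Y \ A is connected. -/
theorem stmt15 {Y : Type*} [TopologicalSpace Y] [CompactSpace Y] [T2Space Y]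
    [ConnectedSpace Y] (p q : Y)
    (hirr : ∀ C : Set Y, IsClosed C → IsPreconnected C → p ∈ C → q ∈ C → C = Set.univ)
    (A B : Set Y) (hAcl : IsClosed A) (hAconn : IsPreconnected A)
    (hBcl : IsClosed B) (hBconn : IsPreconnected B)
    (hAprop : A ≠ Set.univ) (hBprop : B ≠ Set.univ) (hAB : A ∪ B = Set.univ)
    (hp : p ∈ A) (hq : q ∈ B) :
    IsConnected (closure Aᶜ) := by
  -- q ∉ A, otherwise A is a proper subcontinuum containing p and q
  have hqA : q ∉ A := fun h => hAprop (hirr A hAcl hAconn hp h)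
  -- closure Aᶜ is nonempty
  have hne : (closure Aᶜ).Nonempty := ⟨q, subset_closure hqA⟩
  refine ⟨hne, ?_⟩
  rw [isPreconnected_iff_subset_of_fully_disjoint_closed isClosed_closure]
  intro u v hu hv hcov' hdisj
  by_contra h
  push_neg at h
  obtain ⟨hnu, hnv⟩ := h
  have huv : u ∩ v = ∅ := Set.disjoint_iff_inter_eq_empty.mp hdisj
  have hcov : Aᶜ ⊆ u ∪ v := fun x hx => hcov' (subset_closure hx)
  -- Aᶜ ∩ u and Aᶜ ∩ v are nonempty
  have hAu : (Aᶜ ∩ u).Nonempty := by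
    by_contra hE
    rw [Set.not_nonempty_iff_eq_empty] at hE
    have hsub : Aᶜ ⊆ v := fun x hx =>
      (hcov hx).resolve_left (fun hxu => Set.eq_empty_iff_forall_notMem.mp hE x ⟨hx, hxu⟩)
    exact hnv ((closure_minimal hsub hv))
  have hAv : (Aᶜ ∩ v).Nonempty := by
    by_contra hE
    rw [Set.not_nonempty_iff_eq_empty] at hE
    have hsub : Aᶜ ⊆ u := fun x hx =>
      (hcov hx).resolve_right (fun hxv => Set.eq_empty_iff_forall_notMem.mp hE x ⟨hx, hxv⟩)
    exact hnu ((closure_minimal hsub hu))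
  -- q lies in u or v; either way we get a contradiction
  rcases hcov hqA with hqu | hqv
  · exact stmt15_aux2 hAcl hAconn hu hv huv hcov hp hirr hqu hAv
  · refine stmt15_aux2 hAcl hAconn hv hu ?_ ?_ hp hirr hqv hAu
    · rwa [Set.inter_comm]
    · rwa [Set.union_comm u v] at hcov
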